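/- Let H be a set-valued map satisfying (A1). Then there exists a sequence of continuous functions {h^(l)}_{l≥1}, h^(l) : ℝ^d × S × U → ℝ^d, such that for every l ≥ 1: (i) for every (x,s), the set h^(l)(x,s,U) := {h^(l)(x,s,u) : u ∈ U} is a convex and compact subset of ℝ^d; (ii) for every (x,s), H(x,s) ⊆ h^(l+1)(x,s,U) ⊆ h^(l)(x,s,U); (iii) there exists K^(l) > 0 such that for every (x,s,u), ‖h^(l)(x,s,u)‖ ≤ K^(l)(1 + ‖x‖). Furthermore, for every (x,s), H(x,s) = ∩_{l≥1} h^(l)(x,s,U). -/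

import Mathlib

open Filter Topology Pointwise

abbrev Euc (d : ℕ) := EuclideanSpace ℝ (Fin d)

open scoped RealInnerProductSpace
set_option linter.unusedSectionVars false
set_option linter.unusedVariables false


section Proj
variable {d : ℕ}

lemma exists_proj (C : Set (Euc d)) (hne : C.Nonempty) (hcl : IsClosed C) (hcv : Convex ℝ C)
    (y : Euc d) : ∃ p ∈ C, ∀ c ∈ C, ⟪y - p, c - p⟫ ≤ 0 := by
  obtain ⟨v, hv, hvmin⟩ := exists_norm_eq_iInf_of_complete_convex hne hcl.isComplete hcv y
  exact ⟨v, hv, (norm_eq_iInf_iff_real_inner_le_zero hcv hv).1 hvmin⟩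

open Classical in
noncomputable def pcc (C : Set (Euc d)) (y : Euc d) : Euc d :=
  if h : C.Nonempty ∧ IsClosed C ∧ Convex ℝ C then
    (exists_proj C h.1 h.2.1 h.2.2 y).choose else y

lemma pcc_spec {C : Set (Euc d)} (hne : C.Nonempty) (hcl : IsClosed C) (hcv : Convex ℝ C)
    (y : Euc d) : pcc C y ∈ C ∧ ∀ c ∈ C, ⟪y - pcc C y, c - pcc C y⟫ ≤ 0 := by
  have h : C.Nonempty ∧ IsClosed C ∧ Convex ℝ C := ⟨hne, hcl, hcv⟩
  classical rw [pcc, dif_pos h]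
  obtain ⟨h1, h2⟩ := (exists_proj C h.1 h.2.1 h.2.2 y).choose_spec
  exact ⟨h1, h2⟩

lemma pcc_eq_self {C : Set (Euc d)} (hne : C.Nonempty) (hcl : IsClosed C) (hcv : Convex ℝ C)
    {y : Euc d} (hy : y ∈ C) : pcc C y = y := by
  obtain ⟨hmem, hvi⟩ := pcc_spec hne hcl hcv y
  have := hvi y hy
  have h2 : ‖y - pcc C y‖ ^ 2 ≤ 0 := by
    rw [← real_inner_self_eq_norm_sq]; exact this
  have h3 : ‖y - pcc C y‖ = 0 := by nlinarith [norm_nonneg (y - pcc C y), sq_nonneg (‖y - pcc C y‖)]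
  have := norm_eq_zero.mp h3
  have : y = pcc C y := by rwa [sub_eq_zero] at this
  exact this.symm

lemma pcc_lip {C : Set (Euc d)} (hne : C.Nonempty) (hcl : IsClosed C) (hcv : Convex ℝ C)
    (y y' : Euc d) : ‖pcc C y - pcc C y'‖ ≤ ‖y - y'‖ := by
  obtain ⟨hm, hv⟩ := pcc_spec hne hcl hcv y
  obtain ⟨hm', hv'⟩ := pcc_spec hne hcl hcv y'
  set p := pcc C y; set p' := pcc C y'
  have h1 : ⟪y - p, p' - p⟫ ≤ 0 := hv p' hm'
  have h2 : ⟪y' - p', p - p'⟫ ≤ 0 := hv' p hm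
  have key : ‖p - p'‖ ^ 2 ≤ ⟪y - y', p - p'⟫ := by
    have e1 : ⟪y - p, p - p'⟫ ≥ 0 := by
      have : p' - p = -(p - p') := by abel
      rw [this, inner_neg_right] at h1; linarith
    have e2 : ⟪y' - p', p - p'⟫ ≤ 0 := h2
    have : ⟪y - y', p - p'⟫ = ⟪y - p, p - p'⟫ - ⟪y' - p', p - p'⟫ + ⟪p - p', p - p'⟫ := by
      rw [← inner_sub_left, ← inner_add_left]; congr 1; abel
    rw [real_inner_self_eq_norm_sq] at this
    linarith
  have hcs : ⟪y - y', p - p'⟫ ≤ ‖y - y'‖ * ‖p - p'‖ := real_inner_le_norm _ _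
  nlinarith [norm_nonneg (p - p'), norm_nonneg (y - y')]

lemma pcc_dist_le {C : Set (Euc d)} (hne : C.Nonempty) (hcl : IsClosed C) (hcv : Convex ℝ C)
    {y c : Euc d} (hc : c ∈ C) : ‖y - pcc C y‖ ≤ ‖y - c‖ := by
  obtain ⟨hm, hv⟩ := pcc_spec hne hcl hcv y
  set p := pcc C y
  have h1 : ⟪y - p, c - p⟫ ≤ 0 := hv c hc
  have key : ‖y - p‖ ^ 2 ≤ ⟪y - p, y - c⟫ := by
    have : ⟪y - p, y - c⟫ = ⟪y - p, y - p⟫ - ⟪y - p, c - p⟫ := by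
      rw [← inner_sub_right]; congr 1; abel
    rw [real_inner_self_eq_norm_sq] at this; linarith
  have hcs : ⟪y - p, y - c⟫ ≤ ‖y - p‖ * ‖y - c‖ := real_inner_le_norm _ _
  nlinarith [norm_nonneg (y - p), norm_nonneg (y - c)]

lemma pcc_set_perturb {C C' : Set (Euc d)} (hne : C.Nonempty) (hcl : IsClosed C)
    (hcv : Convex ℝ C) (hne' : C'.Nonempty) (hcl' : IsClosed C') (hcv' : Convex ℝ C')
    {δ : ℝ} (h1 : ∀ z ∈ C, ∃ z' ∈ C', ‖z - z'‖ ≤ δ) (h2 : ∀ z ∈ C', ∃ z' ∈ C, ‖z - z'‖ ≤ δ)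
    (y : Euc d) :
    ‖pcc C y - pcc C' y‖ ^ 2 ≤ δ * (‖y - pcc C y‖ + ‖y - pcc C' y‖) := by
  obtain ⟨hm, hv⟩ := pcc_spec hne hcl hcv y
  obtain ⟨hm', hv'⟩ := pcc_spec hne' hcl' hcv' y
  set p := pcc C y; set p' := pcc C' y
  obtain ⟨q', hq', hq'd⟩ := h1 p hm
  obtain ⟨q, hq, hqd⟩ := h2 p' hm'
  have e1 : ⟪y - p', p - p'⟫ ≤ ‖y - p'‖ * δ := by
    have : ⟪y - p', p - p'⟫ = ⟪y - p', p - q'⟫ + ⟪y - p', q' - p'⟫ := by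
      rw [← inner_add_right]; congr 1; abel
    have hA : ⟪y - p', q' - p'⟫ ≤ 0 := hv' q' hq'
    have hB : ⟪y - p', p - q'⟫ ≤ ‖y - p'‖ * ‖p - q'‖ := real_inner_le_norm _ _
    have hC : ‖y - p'‖ * ‖p - q'‖ ≤ ‖y - p'‖ * δ :=
      mul_le_mul_of_nonneg_left hq'd (norm_nonneg _)
    linarith
  have e2 : ⟪y - p, p' - p⟫ ≤ ‖y - p‖ * δ := by
    have : ⟪y - p, p' - p⟫ = ⟪y - p, p' - q⟫ + ⟪y - p, q - p⟫ := by
      rw [← inner_add_right]; congr 1; abel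
    have hA : ⟪y - p, q - p⟫ ≤ 0 := hv q hq
    have hB : ⟪y - p, p' - q⟫ ≤ ‖y - p‖ * ‖p' - q‖ := real_inner_le_norm _ _
    have hC : ‖p' - q‖ ≤ δ := hqd
    have hD : ‖y - p‖ * ‖p' - q‖ ≤ ‖y - p‖ * δ := mul_le_mul_of_nonneg_left hC (norm_nonneg _)
    linarith
  have key : ‖p - p'‖ ^ 2 = ⟪y - p', p - p'⟫ - ⟪y - p, p - p'⟫ := by
    rw [← inner_sub_left, ← real_inner_self_eq_norm_sq]; congr 1; abel
  have e2' : -⟪y - p, p - p'⟫ ≤ ‖y - p‖ * δ := by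
    have : p' - p = -(p - p') := by abel
    rw [this, inner_neg_right] at e2; linarith
  rw [key]; ring_nf; nlinarith [e1, e2']

end Proj

section Constr
variable {d : ℕ} {S : Type*} [MetricSpace S] [CompactSpace S]

noncomputable def sig (H : Euc d → S → Set (Euc d)) (p : Euc d × S) (v : Euc d) : ℝ :=
  sSup ((fun z => ⟪z, v⟫) '' H p.1 p.2)

noncomputable def siglSup (H : Euc d → S → Set (Euc d)) (K : ℝ) (l : ℕ) (p : Euc d × S)
    (v : Euc d) : ℝ :=
  sSup (Set.range (fun q : Euc d × S => sig H q v - (K + l + 1) * dist p q))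

noncomputable def sigl (H : Euc d → S → Set (Euc d)) (K : ℝ) (l : ℕ) (p : Euc d × S)
    (v : Euc d) : ℝ :=
  siglSup H K l p v + (1/2)^l

def Cset (H : Euc d → S → Set (Euc d)) (K : ℝ) (l : ℕ) (p : Euc d × S) : Set (Euc d) :=
  {z | ∀ v : Euc d, ‖v‖ = 1 → ⟪z, v⟫ ≤ sigl H K l p v}

variable {H : Euc d → S → Set (Euc d)} {K : ℝ}

lemma sig_bddAbove (hbd : ∀ x s, ∀ z ∈ H x s, ‖z‖ ≤ K * (1 + ‖x‖)) (p : Euc d × S)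
    (v : Euc d) : BddAbove ((fun z => ⟪z, v⟫) '' H p.1 p.2) := by
  refine ⟨K * (1 + ‖p.1‖) * ‖v‖, ?_⟩
  rintro _ ⟨z, hz, rfl⟩
  calc ⟪z, v⟫ ≤ ‖z‖ * ‖v‖ := real_inner_le_norm _ _
    _ ≤ K * (1 + ‖p.1‖) * ‖v‖ :=
      mul_le_mul_of_nonneg_right (hbd _ _ _ hz) (norm_nonneg _)

lemma le_sig (hbd : ∀ x s, ∀ z ∈ H x s, ‖z‖ ≤ K * (1 + ‖x‖)) {p : Euc d × S} {z : Euc d}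
    (hz : z ∈ H p.1 p.2) (v : Euc d) : ⟪z, v⟫ ≤ sig H p v :=
  le_csSup (sig_bddAbove hbd p v) ⟨z, hz, rfl⟩

lemma sig_le (hne : ∀ x s, (H x s).Nonempty) (hbd : ∀ x s, ∀ z ∈ H x s, ‖z‖ ≤ K * (1 + ‖x‖))
    (p : Euc d × S) {v : Euc d} (hv : ‖v‖ = 1) : sig H p v ≤ K * (1 + ‖p.1‖) := by
  refine csSup_le ((hne p.1 p.2).image _) ?_
  rintro _ ⟨z, hz, rfl⟩
  calc ⟪z, v⟫ ≤ ‖z‖ * ‖v‖ := real_inner_le_norm _ _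
    _ = ‖z‖ := by rw [hv, mul_one]
    _ ≤ K * (1 + ‖p.1‖) := hbd _ _ _ hz

lemma neg_le_sig (hne : ∀ x s, (H x s).Nonempty) (hbd : ∀ x s, ∀ z ∈ H x s, ‖z‖ ≤ K * (1 + ‖x‖))
    (p : Euc d × S) {v : Euc d} (hv : ‖v‖ = 1) : -(K * (1 + ‖p.1‖)) ≤ sig H p v := by
  obtain ⟨z, hz⟩ := hne p.1 p.2
  refine le_trans ?_ (le_sig hbd hz v)
  have h1 : -⟪z, v⟫ ≤ ‖z‖ * ‖v‖ := by
    have := real_inner_le_norm (-z) v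
    rwa [inner_neg_left, norm_neg] at this
  have h2 : ‖z‖ * ‖v‖ = ‖z‖ := by rw [hv, mul_one]
  have h3 : ‖z‖ ≤ K * (1 + ‖p.1‖) := hbd _ _ _ hz
  linarith

lemma fst_sub_norm_le (p q : Euc d × S) : ‖p.1 - q.1‖ ≤ dist p q := by
  rw [Prod.dist_eq]
  calc ‖p.1 - q.1‖ = dist p.1 q.1 := (dist_eq_norm _ _).symm
    _ ≤ _ := le_max_left _ _

lemma sig_le' (hne : ∀ x s, (H x s).Nonempty) (hbd : ∀ x s, ∀ z ∈ H x s, ‖z‖ ≤ K * (1 + ‖x‖))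
    (hK : 0 < K) (p q : Euc d × S) {v : Euc d} (hv : ‖v‖ = 1) :
    sig H q v ≤ K * (1 + ‖p.1‖) + K * dist p q := by
  have h1 : sig H q v ≤ K * (1 + ‖q.1‖) := sig_le hne hbd q hv
  have h2 : ‖q.1‖ ≤ ‖p.1‖ + dist p q := by
    have := fst_sub_norm_le p q
    have h3 : ‖q.1‖ ≤ ‖p.1‖ + ‖p.1 - q.1‖ := by
      have := norm_sub_norm_le p.1 q.1
      have h4 := abs_norm_sub_norm_le p.1 q.1
      nlinarith [abs_nonneg (‖p.1‖ - ‖q.1‖), le_abs_self (‖q.1‖ - ‖p.1‖), abs_sub_comm ‖p.1‖ ‖q.1‖]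
    linarith
  nlinarith

lemma siglSup_bddAbove (hne : ∀ x s, (H x s).Nonempty)
    (hbd : ∀ x s, ∀ z ∈ H x s, ‖z‖ ≤ K * (1 + ‖x‖)) (hK : 0 < K) (l : ℕ) (p : Euc d × S)
    {v : Euc d} (hv : ‖v‖ = 1) :
    BddAbove (Set.range (fun q : Euc d × S => sig H q v - (K + l + 1) * dist p q)) := by
  refine ⟨K * (1 + ‖p.1‖), ?_⟩
  rintro _ ⟨q, rfl⟩
  have h1 := sig_le' hne hbd hK p q hv
  have h2 : (0:ℝ) ≤ dist p q := dist_nonneg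
  have h3 : (0:ℝ) ≤ (l:ℝ) + 1 := by positivity
  simp only
  nlinarith

lemma sig_add_le_sigl (hne : ∀ x s, (H x s).Nonempty)
    (hbd : ∀ x s, ∀ z ∈ H x s, ‖z‖ ≤ K * (1 + ‖x‖)) (hK : 0 < K) (l : ℕ) (p : Euc d × S)
    {v : Euc d} (hv : ‖v‖ = 1) : sig H p v + (1/2)^l ≤ sigl H K l p v := by
  have h1 : sig H p v ≤ siglSup H K l p v := by
    have := le_csSup (siglSup_bddAbove hne hbd hK l p hv) ⟨p, rfl⟩
    simpa [siglSup] using this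
  simp only [sigl]; linarith

lemma sigl_le (hne : ∀ x s, (H x s).Nonempty)
    (hbd : ∀ x s, ∀ z ∈ H x s, ‖z‖ ≤ K * (1 + ‖x‖)) (hK : 0 < K) (l : ℕ) (p : Euc d × S)
    {v : Euc d} (hv : ‖v‖ = 1) : sigl H K l p v ≤ K * (1 + ‖p.1‖) + (1/2)^l := by
  have h1 : siglSup H K l p v ≤ K * (1 + ‖p.1‖) := by
    refine csSup_le ⟨_, ⟨p, rfl⟩⟩ ?_
    rintro _ ⟨q, rfl⟩
    have h1 := sig_le' hne hbd hK p q hv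
    have h2 : (0:ℝ) ≤ dist p q := dist_nonneg
    have h3 : (0:ℝ) ≤ (l:ℝ) + 1 := by positivity
    simp only
    nlinarith
  simp only [sigl]; linarith

lemma siglSup_antitone (hne : ∀ x s, (H x s).Nonempty)
    (hbd : ∀ x s, ∀ z ∈ H x s, ‖z‖ ≤ K * (1 + ‖x‖)) (hK : 0 < K) {l l' : ℕ} (hll : l ≤ l')
    (p : Euc d × S) {v : Euc d} (hv : ‖v‖ = 1) :
    siglSup H K l' p v ≤ siglSup H K l p v := by
  refine csSup_le ⟨_, ⟨p, rfl⟩⟩ ?_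
  rintro _ ⟨q, rfl⟩
  refine le_trans ?_ (le_csSup (siglSup_bddAbove hne hbd hK l p hv) ⟨q, rfl⟩)
  simp only
  have h2 : (0:ℝ) ≤ dist p q := dist_nonneg
  have h3 : (l:ℝ) ≤ (l':ℝ) := by exact_mod_cast hll
  nlinarith

lemma sigl_antitone (hne : ∀ x s, (H x s).Nonempty)
    (hbd : ∀ x s, ∀ z ∈ H x s, ‖z‖ ≤ K * (1 + ‖x‖)) (hK : 0 < K) {l l' : ℕ} (hll : l ≤ l')
    (p : Euc d × S) {v : Euc d} (hv : ‖v‖ = 1) : sigl H K l' p v ≤ sigl H K l p v := by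
  have h1 := siglSup_antitone hne hbd hK hll p hv
  have h2 : ((1:ℝ)/2)^l' ≤ (1/2)^l :=
    pow_le_pow_of_le_one (by norm_num) (by norm_num) hll
  simp only [sigl]; linarith

lemma sigl_lip (hne : ∀ x s, (H x s).Nonempty)
    (hbd : ∀ x s, ∀ z ∈ H x s, ‖z‖ ≤ K * (1 + ‖x‖)) (hK : 0 < K) (l : ℕ) (p p' : Euc d × S)
    {v : Euc d} (hv : ‖v‖ = 1) :
    sigl H K l p v ≤ sigl H K l p' v + (K + l + 1) * dist p p' := by
  have h1 : siglSup H K l p v ≤ siglSup H K l p' v + (K + l + 1) * dist p p' := by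
    refine csSup_le ⟨_, ⟨p, rfl⟩⟩ ?_
    rintro _ ⟨q, rfl⟩
    have h2 : sig H q v - (K + l + 1) * dist p' q ≤ siglSup H K l p' v :=
      le_csSup (siglSup_bddAbove hne hbd hK l p' hv) ⟨q, rfl⟩
    have h3 : dist p' q ≤ dist p' p + dist p q := dist_triangle _ _ _
    have h4 : (0:ℝ) ≤ K + l + 1 := by positivity
    have h5 : dist p' p = dist p p' := dist_comm _ _
    simp only
    nlinarith
  simp only [sigl]; linarith

end Constr

section Usc
variable {d : ℕ} {S : Type*} [MetricSpace S] [CompactSpace S]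
variable {H : Euc d → S → Set (Euc d)} {K : ℝ}

lemma siglSup_usc (hne : ∀ x s, (H x s).Nonempty)
    (hbd : ∀ x s, ∀ z ∈ H x s, ‖z‖ ≤ K * (1 + ‖x‖)) (hK : 0 < K)
    (hA1iii : ∀ (x : Euc d) (s : S) (xn : ℕ → Euc d) (sn : ℕ → S) (zn : ℕ → Euc d) (z : Euc d),
      Tendsto xn atTop (𝓝 x) → Tendsto sn atTop (𝓝 s) →
      (∀ n, zn n ∈ H (xn n) (sn n)) → Tendsto zn atTop (𝓝 z) → z ∈ H x s)
    (p : Euc d × S) {v : Euc d} (hv : ‖v‖ = 1) {η : ℝ} (hη : 0 < η) :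
    ∃ l, siglSup H K l p v ≤ sig H p v + η := by
  by_contra hcon
  push_neg at hcon
  have hq : ∀ l : ℕ, ∃ q : Euc d × S, sig H p v + η < sig H q v - (K + l + 1) * dist p q := by
    intro l
    have hcon' := hcon l
    rw [siglSup] at hcon'
    have hne2 : (Set.range (fun q : Euc d × S => sig H q v - (K + ↑l + 1) * dist p q)).Nonempty :=
      ⟨_, Set.mem_range_self p⟩
    obtain ⟨a, ha, hlt⟩ := exists_lt_of_lt_csSup hne2 hcon'
    obtain ⟨q, rfl⟩ := ha
    exact ⟨q, hlt⟩
  choose q hq using hq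
  set M : ℝ := 2 * (K * (1 + ‖p.1‖)) with hM
  have hMpos : 0 < M := by positivity
  have hdle : ∀ l : ℕ, dist p (q l) ≤ M / (l + 1) := by
    intro l
    have h1 := hq l
    have h2 := sig_le' hne hbd hK p (q l) hv
    have h3 := neg_le_sig hne hbd p hv
    have h4 : (0:ℝ) ≤ dist p (q l) := dist_nonneg
    rw [le_div_iff₀ (by positivity)]
    nlinarith
  have hqt : Tendsto q atTop (𝓝 p) := by
    rw [tendsto_iff_dist_tendsto_zero]
    have hg : Tendsto (fun n : ℕ => M / ((n : ℝ) + 1)) atTop (𝓝 0) := by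
      have h := tendsto_one_div_add_atTop_nhds_zero_nat.const_mul M
      rw [mul_zero] at h
      convert h using 2 with n
      rw [div_eq_mul_one_div]
    exact squeeze_zero (fun n => dist_nonneg) (fun n => by rw [dist_comm]; exact hdle n) hg
  have hz : ∀ l : ℕ, ∃ z : Euc d, z ∈ H (q l).1 (q l).2 ∧ sig H p v + η < ⟪z, v⟫ := by
    intro l
    have hcd : (0:ℝ) ≤ (K + l + 1) * dist p (q l) :=
      mul_nonneg (by positivity) dist_nonneg
    have h1 : sig H p v + η < sig H (q l) v := by have := hq l; linarith
    obtain ⟨_, ⟨z, hzmem, rfl⟩, h2⟩ := exists_lt_of_lt_csSup ((hne _ _).image _) h1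
    exact ⟨z, hzmem, h2⟩
  choose z hzmem hzlt using hz
  have hB : ∀ l, z l ∈ Metric.closedBall (0 : Euc d) (K * (1 + ‖p.1‖ + M)) := by
    intro l
    rw [Metric.mem_closedBall, dist_zero_right]
    have h1 : ‖z l‖ ≤ K * (1 + ‖(q l).1‖) := hbd _ _ _ (hzmem l)
    have h2 : ‖(q l).1‖ ≤ ‖p.1‖ + dist p (q l) := by
      have h3 := fst_sub_norm_le p (q l)
      have h4 : ‖(q l).1‖ ≤ ‖p.1‖ + ‖p.1 - (q l).1‖ := by
        have h6 := norm_sub_norm_le (q l).1 p.1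
        have h5 : ‖(q l).1 - p.1‖ = ‖p.1 - (q l).1‖ := norm_sub_rev _ _
        linarith
      linarith
    have h5 : dist p (q l) ≤ M := by
      have := hdle l
      have h6 : M / ((l:ℝ) + 1) ≤ M := by
        rw [div_le_iff₀ (by positivity)]
        nlinarith [Nat.cast_nonneg (α := ℝ) l]
      linarith
    nlinarith
  obtain ⟨zs, _, φ, hφ, hzt⟩ := (isCompact_closedBall (0 : Euc d) _).tendsto_subseq hB
  have hqφ : Tendsto (q ∘ φ) atTop (𝓝 p) := hqt.comp hφ.tendsto_atTop
  have hx : Tendsto (fun n : ℕ => (q (φ n)).1) atTop (𝓝 p.1) :=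
    (continuous_fst.tendsto p).comp hqφ
  have hs : Tendsto (fun n : ℕ => (q (φ n)).2) atTop (𝓝 p.2) :=
    (continuous_snd.tendsto p).comp hqφ
  have hmem : zs ∈ H p.1 p.2 :=
    hA1iii p.1 p.2 _ _ _ _ hx hs (fun n => hzmem (φ n)) hzt
  have hle : ⟪zs, v⟫ ≤ sig H p v := le_sig hbd hmem v
  have hic : Tendsto (fun n : ℕ => ⟪z (φ n), v⟫) atTop (𝓝 ⟪zs, v⟫) :=
    ((continuous_id.inner continuous_const).tendsto zs).comp hzt
  have hge : sig H p v + η ≤ ⟪zs, v⟫ :=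
    le_of_tendsto_of_tendsto' tendsto_const_nhds hic (fun n => (hzlt (φ n)).le)
  linarith

lemma sigl_usc (hne : ∀ x s, (H x s).Nonempty)
    (hbd : ∀ x s, ∀ z ∈ H x s, ‖z‖ ≤ K * (1 + ‖x‖)) (hK : 0 < K)
    (hA1iii : ∀ (x : Euc d) (s : S) (xn : ℕ → Euc d) (sn : ℕ → S) (zn : ℕ → Euc d) (z : Euc d),
      Tendsto xn atTop (𝓝 x) → Tendsto sn atTop (𝓝 s) →
      (∀ n, zn n ∈ H (xn n) (sn n)) → Tendsto zn atTop (𝓝 z) → z ∈ H x s)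
    (p : Euc d × S) {v : Euc d} (hv : ‖v‖ = 1) {η : ℝ} (hη : 0 < η) :
    ∃ l, sigl H K l p v ≤ sig H p v + η := by
  obtain ⟨l₀, hl₀⟩ := siglSup_usc hne hbd hK hA1iii p hv (half_pos hη)
  obtain ⟨l₁, hl₁⟩ := exists_pow_lt_of_lt_one (half_pos hη) (by norm_num : (1:ℝ)/2 < 1)
  refine ⟨max l₀ l₁, ?_⟩
  have h1 : siglSup H K (max l₀ l₁) p v ≤ siglSup H K l₀ p v :=
    siglSup_antitone hne hbd hK (le_max_left _ _) p hv
  have h2 : ((1:ℝ)/2) ^ (max l₀ l₁) ≤ (1/2) ^ l₁ :=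
    pow_le_pow_of_le_one (by norm_num) (by norm_num) (le_max_right _ _)
  simp only [sigl]
  linarith

end Usc

section CsetFacts
variable {d : ℕ} {S : Type*} [MetricSpace S] [CompactSpace S]
variable {H : Euc d → S → Set (Euc d)} {K : ℝ}

lemma cset_convex (l : ℕ) (p : Euc d × S) : Convex ℝ (Cset H K l p) := by
  intro z1 hz1 z2 hz2 a b ha hb hab
  intro v hv
  have h1 := hz1 v hv
  have h2 := hz2 v hv
  have : ⟪a • z1 + b • z2, v⟫ = a * ⟪z1, v⟫ + b * ⟪z2, v⟫ := by
    rw [inner_add_left, real_inner_smul_left, real_inner_smul_left]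
  rw [this]
  have hsum : a * sigl H K l p v + b * sigl H K l p v = sigl H K l p v := by
    rw [← add_mul, hab, one_mul]
  nlinarith [mul_le_mul_of_nonneg_left h1 ha, mul_le_mul_of_nonneg_left h2 hb]

lemma cset_closed (l : ℕ) (p : Euc d × S) : IsClosed (Cset H K l p) := by
  have : Cset H K l p = ⋂ (v : Euc d) (_ : ‖v‖ = 1), {z : Euc d | ⟪z, v⟫ ≤ sigl H K l p v} := by
    ext z; simp [Cset, Set.mem_iInter]
  rw [this]
  exact isClosed_iInter fun v => isClosed_iInter fun hv =>
    isClosed_le (Continuous.inner continuous_id continuous_const) continuous_const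

lemma h_subset_cset (hne : ∀ x s, (H x s).Nonempty)
    (hbd : ∀ x s, ∀ z ∈ H x s, ‖z‖ ≤ K * (1 + ‖x‖)) (hK : 0 < K) (l : ℕ) (p : Euc d × S) :
    H p.1 p.2 ⊆ Cset H K l p := by
  intro z hz v hv
  have h1 := le_sig hbd hz v
  have h2 := sig_add_le_sigl hne hbd hK l p hv
  have h3 : (0:ℝ) < (1/2)^l := by positivity
  linarith

lemma cset_nonempty (hne : ∀ x s, (H x s).Nonempty)
    (hbd : ∀ x s, ∀ z ∈ H x s, ‖z‖ ≤ K * (1 + ‖x‖)) (hK : 0 < K) (l : ℕ) (p : Euc d × S) :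
    (Cset H K l p).Nonempty :=
  (hne p.1 p.2).mono (h_subset_cset hne hbd hK l p)

lemma cset_bounded (hne : ∀ x s, (H x s).Nonempty)
    (hbd : ∀ x s, ∀ z ∈ H x s, ‖z‖ ≤ K * (1 + ‖x‖)) (hK : 0 < K) (l : ℕ) (p : Euc d × S)
    {z : Euc d} (hz : z ∈ Cset H K l p) : ‖z‖ ≤ K * (1 + ‖p.1‖) + 1 := by
  rcases eq_or_ne z 0 with rfl | hz0
  · simp only [norm_zero]; positivity
  · have hnz : (0:ℝ) < ‖z‖ := norm_pos_iff.mpr hz0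
    have hv : ‖(‖z‖⁻¹ • z : Euc d)‖ = 1 := by
      rw [norm_smul, norm_inv, norm_norm, inv_mul_cancel₀ (ne_of_gt hnz)]
    have h1 := hz _ hv
    have h2 : ⟪z, ‖z‖⁻¹ • z⟫ = ‖z‖ := by
      rw [real_inner_smul_right, real_inner_self_eq_norm_sq]
      field_simp
    rw [h2] at h1
    have h3 := sigl_le hne hbd hK l p hv
    have h4 : ((1:ℝ)/2)^l ≤ 1 := pow_le_one₀ (by norm_num) (by norm_num)
    linarith

lemma cset_antitone (hne : ∀ x s, (H x s).Nonempty)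
    (hbd : ∀ x s, ∀ z ∈ H x s, ‖z‖ ≤ K * (1 + ‖x‖)) (hK : 0 < K) {l l' : ℕ} (hll : l ≤ l')
    (p : Euc d × S) : Cset H K l' p ⊆ Cset H K l p := by
  intro z hz v hv
  exact le_trans (hz v hv) (sigl_antitone hne hbd hK hll p hv)

lemma cset_move (hne : ∀ x s, (H x s).Nonempty)
    (hbd : ∀ x s, ∀ z ∈ H x s, ‖z‖ ≤ K * (1 + ‖x‖)) (hK : 0 < K) (l : ℕ) {p p' : Euc d × S}
    {z z₀ : Euc d} (hz : z ∈ Cset H K l p') (hz₀ : z₀ ∈ H p'.1 p'.2)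
    (hθ : (K + l + 1) * dist p p' * 2^l ≤ 1) :
    z + ((K + l + 1) * dist p p' * 2^l) • (z₀ - z) ∈ Cset H K l p := by
  intro v hv
  set θ : ℝ := (K + l + 1) * dist p p' * 2^l with hθdef
  have hθ0 : 0 ≤ θ := by positivity
  have h2l : (2:ℝ)^l * (1/2)^l = 1 := by rw [← mul_pow]; norm_num
  have ha : ⟪z, v⟫ ≤ sigl H K l p' v := hz v hv
  have hb : ⟪z₀, v⟫ + (1/2)^l ≤ sigl H K l p' v := by
    have h1 := le_sig hbd hz₀ v
    have h2 := sig_add_le_sigl hne hbd hK l p' hv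
    linarith
  have hlip : sigl H K l p' v ≤ sigl H K l p v + (K + l + 1) * dist p p' := by
    have := sigl_lip hne hbd hK l p' p hv
    rwa [dist_comm p' p] at this
  have hexp : ⟪z + θ • (z₀ - z), v⟫ = (1 - θ) * ⟪z, v⟫ + θ * ⟪z₀, v⟫ := by
    rw [inner_add_left, real_inner_smul_left, inner_sub_left]
    ring
  rw [hexp]
  have hkey : θ * (1/2)^l = (K + l + 1) * dist p p' := by
    rw [hθdef]
    calc (K + ↑l + 1) * dist p p' * 2 ^ l * (1 / 2) ^ l
        = (K + ↑l + 1) * dist p p' * ((2:ℝ)^l * (1/2)^l) := by ring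
      _ = (K + ↑l + 1) * dist p p' := by rw [h2l, mul_one]
  nlinarith [mul_le_mul_of_nonneg_left ha (by linarith : (0:ℝ) ≤ 1 - θ),
    mul_le_mul_of_nonneg_left hb hθ0]

lemma cset_inter (hne : ∀ x s, (H x s).Nonempty)
    (hbd : ∀ x s, ∀ z ∈ H x s, ‖z‖ ≤ K * (1 + ‖x‖)) (hK : 0 < K)
    (hcl : ∀ x s, IsClosed (H x s)) (hcv : ∀ x s, Convex ℝ (H x s))
    (hA1iii : ∀ (x : Euc d) (s : S) (xn : ℕ → Euc d) (sn : ℕ → S) (zn : ℕ → Euc d) (z : Euc d),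
      Tendsto xn atTop (𝓝 x) → Tendsto sn atTop (𝓝 s) →
      (∀ n, zn n ∈ H (xn n) (sn n)) → Tendsto zn atTop (𝓝 z) → z ∈ H x s)
    (p : Euc d × S) : ⋂ l, Cset H K l p = H p.1 p.2 := by
  apply Set.Subset.antisymm
  · intro z hz
    rw [Set.mem_iInter] at hz
    have hkey : ∀ v : Euc d, ‖v‖ = 1 → ⟪z, v⟫ ≤ sig H p v := by
      intro v hv
      refine le_of_forall_pos_le_add ?_
      intro η hη
      obtain ⟨l, hl⟩ := sigl_usc hne hbd hK hA1iii p hv hη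
      exact le_trans (hz l v hv) hl
    by_contra hzH
    obtain ⟨f, u, hfa, hfz⟩ := geometric_hahn_banach_closed_point (hcv p.1 p.2) (hcl p.1 p.2) hzH
    set w : Euc d := (InnerProductSpace.toDual ℝ (Euc d)).symm f with hwdef
    have hw : ∀ y, ⟪w, y⟫ = f y := fun y => by
      rw [hwdef]; exact InnerProductSpace.toDual_symm_apply
    obtain ⟨a₀, ha₀⟩ := hne p.1 p.2
    have hwne : w ≠ 0 := by
      intro h0
      have h1 : (0:ℝ) < u := by have := hfa a₀ ha₀; rw [← hw a₀, h0] at this; simpa using this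
      have h2 : u < 0 := by have := hfz; rw [← hw z, h0] at this; simpa using this
      linarith
    have hnw : (0:ℝ) < ‖w‖ := norm_pos_iff.mpr hwne
    have hv : ‖(‖w‖⁻¹ • w : Euc d)‖ = 1 := by
      rw [norm_smul, norm_inv, norm_norm, inv_mul_cancel₀ (ne_of_gt hnw)]
    have hsig : sig H p (‖w‖⁻¹ • w) ≤ ‖w‖⁻¹ * u := by
      refine csSup_le ((hne p.1 p.2).image _) ?_
      rintro _ ⟨a, ha, rfl⟩
      show ⟪a, ‖w‖⁻¹ • w⟫ ≤ ‖w‖⁻¹ * u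
      have h1 : ⟪a, ‖w‖⁻¹ • w⟫ = ‖w‖⁻¹ * ⟪w, a⟫ := by
        rw [real_inner_smul_right, real_inner_comm]
      rw [h1, hw a]
      have := (hfa a ha).le
      exact mul_le_mul_of_nonneg_left this (by positivity)
    have hzv : ⟪z, ‖w‖⁻¹ • w⟫ = ‖w‖⁻¹ * f z := by
      rw [real_inner_smul_right, real_inner_comm, hw z]
    have h2 := hkey _ hv
    rw [hzv] at h2
    have h3 : ‖w‖⁻¹ * f z ≤ ‖w‖⁻¹ * u := le_trans h2 hsig
    have h4 : f z ≤ u := le_of_mul_le_mul_left (by linarith [h3]) (by positivity : (0:ℝ) < ‖w‖⁻¹)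
    linarith
  · intro z hz
    rw [Set.mem_iInter]
    exact fun l => h_subset_cset hne hbd hK l p hz

end CsetFacts

section Param
variable {d : ℕ} {S : Type*} [MetricSpace S] [CompactSpace S]

noncomputable def Rfun (K : ℝ) (x : Euc d) : ℝ := K * (1 + ‖x‖) + 2

noncomputable def param (H : Euc d → S → Set (Euc d)) (K : ℝ) (l : ℕ) (x : Euc d) (s : S)
    (u : Metric.closedBall (0 : Euc d) 1) : Euc d :=
  pcc (Cset H K l (x, s)) (Rfun K x • (u : Euc d))

variable {H : Euc d → S → Set (Euc d)} {K : ℝ}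

lemma param_range (hne : ∀ x s, (H x s).Nonempty)
    (hbd : ∀ x s, ∀ z ∈ H x s, ‖z‖ ≤ K * (1 + ‖x‖)) (hK : 0 < K) (l : ℕ) (x : Euc d) (s : S) :
    Set.range (param H K l x s) = Cset H K l (x, s) := by
  have hCne := cset_nonempty hne hbd hK l (x, s)
  have hCcl := cset_closed (H := H) (K := K) l (x, s)
  have hCcv := cset_convex (H := H) (K := K) l (x, s)
  apply Set.Subset.antisymm
  · rintro _ ⟨u, rfl⟩
    exact (pcc_spec hCne hCcl hCcv _).1
  · intro z hz
    have hb : ‖z‖ ≤ K * (1 + ‖x‖) + 1 := cset_bounded hne hbd hK l (x, s) hz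
    have hR0 : (0:ℝ) < Rfun K x := by rw [Rfun]; positivity
    have hzR : ‖z‖ ≤ Rfun K x := by rw [Rfun]; linarith
    have hz1 : ‖(Rfun K x)⁻¹ • z‖ ≤ 1 := by
      rw [norm_smul, norm_inv, Real.norm_eq_abs, abs_of_pos hR0]
      calc (Rfun K x)⁻¹ * ‖z‖ ≤ (Rfun K x)⁻¹ * Rfun K x :=
            mul_le_mul_of_nonneg_left hzR (by positivity)
        _ = 1 := inv_mul_cancel₀ (ne_of_gt hR0)
    refine ⟨⟨(Rfun K x)⁻¹ • z, mem_closedBall_zero_iff.mpr hz1⟩, ?_⟩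
    show pcc _ (Rfun K x • ((Rfun K x)⁻¹ • z)) = z
    rw [smul_smul, mul_inv_cancel₀ (ne_of_gt hR0), one_smul]
    exact pcc_eq_self hCne hCcl hCcv hz

lemma cset_compact (hne : ∀ x s, (H x s).Nonempty)
    (hbd : ∀ x s, ∀ z ∈ H x s, ‖z‖ ≤ K * (1 + ‖x‖)) (hK : 0 < K) (l : ℕ) (p : Euc d × S) :
    IsCompact (Cset H K l p) :=
  IsCompact.of_isClosed_subset (isCompact_closedBall 0 (K * (1 + ‖p.1‖) + 1))
    (cset_closed l p)
    (fun z hz => mem_closedBall_zero_iff.mpr (cset_bounded hne hbd hK l p hz))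

end Param

section ParamCont
set_option linter.unusedSectionVars false
variable {d : ℕ} {S : Type*} [MetricSpace S] [CompactSpace S]
variable {H : Euc d → S → Set (Euc d)} {K : ℝ}

set_option maxHeartbeats 2000000 in
lemma param_continuous (hne : ∀ x s, (H x s).Nonempty)
    (hbd : ∀ x s, ∀ z ∈ H x s, ‖z‖ ≤ K * (1 + ‖x‖)) (hK : 0 < K) (l : ℕ) :
    Continuous (fun q : Euc d × S × (Metric.closedBall (0 : Euc d) 1) =>
      param H K l q.1 q.2.1 q.2.2) := by
  rw [Metric.continuous_iff]
  rintro ⟨x, s, u⟩ ε hε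
  set t : ℝ := (K + l + 1) * 2 ^ l with ht
  have ht0 : 0 < t := by positivity
  set B₁ : ℝ := K * (1 + ‖x‖ + 1) + 1 with hB₁
  have hB₁0 : 0 < B₁ := by positivity
  set Rx : ℝ := Rfun K x with hRxdef
  have hRx0 : 0 < Rx := by rw [hRxdef, Rfun]; positivity
  set A : ℝ := 4 * B₁ * t * (Rx + B₁) with hA
  have hA0 : 0 < A := by positivity
  set δ : ℝ := min (min 1 (1/(t+1))) (min (ε/(2*(K + Rx + 1))) (ε^2/(4*(A+1)))) with hδ
  have hδ0 : 0 < δ := by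
    refine lt_min (lt_min one_pos (by positivity)) (lt_min (by positivity) (by positivity))
  refine ⟨δ, hδ0, ?_⟩
  rintro ⟨x', s', u'⟩ hd
  have hdx : dist x' x < δ := by
    refine lt_of_le_of_lt ?_ hd
    rw [Prod.dist_eq]; exact le_max_left _ _
  have hds : dist s' s < δ := by
    refine lt_of_le_of_lt ?_ hd
    rw [Prod.dist_eq, Prod.dist_eq]
    exact le_trans (le_max_left _ _) (le_max_right _ _)
  have hdu : ‖(u' : Euc d) - (u : Euc d)‖ < δ := by
    refine lt_of_le_of_lt ?_ hd
    rw [Prod.dist_eq, Prod.dist_eq, Subtype.dist_eq, dist_eq_norm]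
    exact le_trans (le_max_right _ _) (le_max_right _ _)
  set p : Euc d × S := (x, s) with hp
  set p' : Euc d × S := (x', s') with hp'
  have hρ : dist p' p < δ := by
    rw [Prod.dist_eq]; exact max_lt hdx hds
  have hδ1 : δ ≤ 1 := le_trans (min_le_left _ _) (min_le_left _ _)
  have hδt : δ ≤ 1/(t+1) := le_trans (min_le_left _ _) (min_le_right _ _)
  have hδε1 : δ ≤ ε/(2*(K + Rx + 1)) := le_trans (min_le_right _ _) (min_le_left _ _)
  have hδε2 : δ ≤ ε^2/(4*(A+1)) := le_trans (min_le_right _ _) (min_le_right _ _)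
  have hρ1 : dist p' p ≤ 1 := le_trans hρ.le hδ1
  have htρ : t * dist p' p ≤ 1 := by
    have h1 : t * dist p' p ≤ t * δ := mul_le_mul_of_nonneg_left hρ.le ht0.le
    have h2 : t * δ ≤ t * (1/(t+1)) := mul_le_mul_of_nonneg_left hδt ht0.le
    have h3 : t * (1/(t+1)) ≤ 1 := by
      rw [mul_one_div, div_le_one (by positivity)]; linarith
    linarith
  have hxx' : ‖x' - x‖ < δ := by rwa [← dist_eq_norm]
  have hx'bd : ‖x'‖ ≤ ‖x‖ + 1 := by
    have h1 : ‖x'‖ - ‖x‖ ≤ ‖x' - x‖ := norm_sub_norm_le _ _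
    linarith
  -- bounds on elements
  have hCbd : ∀ z ∈ Cset H K l p, ‖z‖ ≤ B₁ := by
    intro z hz
    have := cset_bounded hne hbd hK l p hz
    rw [hB₁]
    have : ‖z‖ ≤ K * (1 + ‖x‖) + 1 := this
    nlinarith
  have hCbd' : ∀ z ∈ Cset H K l p', ‖z‖ ≤ B₁ := by
    intro z hz
    have h1 : ‖z‖ ≤ K * (1 + ‖x'‖) + 1 := cset_bounded hne hbd hK l p' hz
    rw [hB₁]; nlinarith
  have hHbd : ∀ z ∈ H x s, ‖z‖ ≤ B₁ := by
    intro z hz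
    have := hbd x s z hz
    rw [hB₁]; nlinarith [norm_nonneg x]
  have hHbd' : ∀ z ∈ H x' s', ‖z‖ ≤ B₁ := by
    intro z hz
    have := hbd x' s' z hz
    rw [hB₁]; nlinarith
  -- mutual approximation of the two convex sets
  set δ' : ℝ := t * dist p' p * (2 * B₁) with hδ'
  have hδ'0 : 0 ≤ δ' := by positivity
  have hmove : ∀ (pa pb : Euc d × S), pa = p ∨ pa = p' → pb = p ∨ pb = p' →
      (∀ z ∈ Cset H K l pa, ‖z‖ ≤ B₁) → (∀ z ∈ H pa.1 pa.2, ‖z‖ ≤ B₁) →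
      dist pb pa ≤ dist p' p →
      ∀ z ∈ Cset H K l pa, ∃ z' ∈ Cset H K l pb, ‖z - z'‖ ≤ δ' := by
    intro pa pb _ _ hCa hHa hdab z hz
    obtain ⟨z₀, hz₀⟩ := hne pa.1 pa.2
    have hθ1 : (K + l + 1) * dist pb pa * 2 ^ l ≤ 1 := by
      have h1 : (K + l + 1) * dist pb pa * 2 ^ l ≤ (K + l + 1) * dist p' p * 2 ^ l := by
        have : (0:ℝ) ≤ (K + l + 1) := by positivity
        have h2 : (0:ℝ) ≤ (2:ℝ) ^ l := by positivity
        nlinarith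
      have h2 : (K + l + 1) * dist p' p * 2 ^ l = t * dist p' p := by rw [ht]; ring
      linarith
    refine ⟨z + ((K + l + 1) * dist pb pa * 2 ^ l) • (z₀ - z),
      cset_move hne hbd hK l hz hz₀ hθ1, ?_⟩
    have hθ0 : (0:ℝ) ≤ (K + l + 1) * dist pb pa * 2 ^ l := by positivity
    rw [sub_add_cancel_left, norm_neg, norm_smul, Real.norm_eq_abs, abs_of_nonneg hθ0]
    have h3 : ‖z₀ - z‖ ≤ 2 * B₁ := by
      have := norm_sub_le z₀ z
      have h4 := hHa z₀ hz₀
      have h5 := hCa z hz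
      linarith
    have h6 : (K + l + 1) * dist pb pa * 2 ^ l ≤ t * dist p' p := by
      have h7 : (K + l + 1) * dist pb pa * 2 ^ l ≤ (K + l + 1) * dist p' p * 2 ^ l := by
        have : (0:ℝ) ≤ (K + l + 1) := by positivity
        have h2 : (0:ℝ) ≤ (2:ℝ) ^ l := by positivity
        nlinarith
      have h8 : (K + l + 1) * dist p' p * 2 ^ l = t * dist p' p := by rw [ht]; ring
      linarith
    rw [hδ']
    have h9 : (0:ℝ) ≤ dist p' p := dist_nonneg
    nlinarith
  have h1 : ∀ z ∈ Cset H K l p, ∃ z' ∈ Cset H K l p', ‖z - z'‖ ≤ δ' :=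
    hmove p p' (Or.inl rfl) (Or.inr rfl) hCbd hHbd (by rw [dist_comm])
  have h2 : ∀ z ∈ Cset H K l p', ∃ z' ∈ Cset H K l p, ‖z - z'‖ ≤ δ' :=
    hmove p' p (Or.inr rfl) (Or.inl rfl) hCbd' hHbd' (by rw [dist_comm])
  -- now the projection estimates
  have hCne := cset_nonempty hne hbd hK l p
  have hCcl := cset_closed (H := H) (K := K) l p
  have hCcv := cset_convex (H := H) (K := K) l p
  have hCne' := cset_nonempty hne hbd hK l p'
  have hCcl' := cset_closed (H := H) (K := K) l p'
  have hCcv' := cset_convex (H := H) (K := K) l p'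
  set y : Euc d := Rx • (u : Euc d) with hy
  set y' : Euc d := Rfun K x' • (u' : Euc d) with hy'
  have hunorm : ‖(u : Euc d)‖ ≤ 1 := mem_closedBall_zero_iff.mp u.2
  have hunorm' : ‖(u' : Euc d)‖ ≤ 1 := mem_closedBall_zero_iff.mp u'.2
  have hynorm : ‖y‖ ≤ Rx := by
    rw [hy, norm_smul, Real.norm_eq_abs, abs_of_pos hRx0]
    nlinarith
  -- second term
  have hsq := pcc_set_perturb hCne hCcl hCcv hCne' hCcl' hCcv' h1 h2 y
  have hterm2 : ‖pcc (Cset H K l p) y - pcc (Cset H K l p') y‖ ≤ ε/2 := by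
    have hb1 : ‖y - pcc (Cset H K l p) y‖ ≤ Rx + B₁ := by
      have := hCbd _ (pcc_spec hCne hCcl hCcv y).1
      have := norm_sub_le y (pcc (Cset H K l p) y)
      linarith [hCbd _ (pcc_spec hCne hCcl hCcv y).1]
    have hb2 : ‖y - pcc (Cset H K l p') y‖ ≤ Rx + B₁ := by
      have := norm_sub_le y (pcc (Cset H K l p') y)
      linarith [hCbd' _ (pcc_spec hCne' hCcl' hCcv' y).1]
    have hsum : ‖y - pcc (Cset H K l p) y‖ + ‖y - pcc (Cset H K l p') y‖ ≤ 2*(Rx + B₁) := by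
      linarith
    have hrhs : δ' * (‖y - pcc (Cset H K l p) y‖ + ‖y - pcc (Cset H K l p') y‖)
        ≤ (A+1) * δ := by
      have hnn : 0 ≤ ‖y - pcc (Cset H K l p) y‖ + ‖y - pcc (Cset H K l p') y‖ := by positivity
      have hstep : δ' * (‖y - pcc (Cset H K l p) y‖ + ‖y - pcc (Cset H K l p') y‖)
          ≤ δ' * (2*(Rx + B₁)) := mul_le_mul_of_nonneg_left hsum hδ'0
      have hδ'A : δ' * (2*(Rx + B₁)) ≤ A * δ := by
        rw [hδ', hA]
        have h9 : (0:ℝ) ≤ dist p' p := dist_nonneg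
        nlinarith [hρ.le]
      nlinarith
    have hsq2 : ‖pcc (Cset H K l p) y - pcc (Cset H K l p') y‖^2 ≤ (ε/2)^2 := by
      have hδA : (A+1) * δ ≤ (ε/2)^2 := by
        have := hδε2
        have h10 : (A+1) * δ ≤ (A+1) * (ε^2/(4*(A+1))) :=
          mul_le_mul_of_nonneg_left hδε2 (by positivity)
        have h11 : (A+1) * (ε^2/(4*(A+1))) = ε^2/4 := by field_simp
        have h12 : ε^2/4 = (ε/2)^2 := by ring
        linarith
      linarith
    exact le_of_pow_le_pow_left₀ (by norm_num) (by positivity) hsq2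
  -- first term
  have hterm1 : ‖pcc (Cset H K l p') y' - pcc (Cset H K l p') y‖ < ε/2 := by
    have hlip := pcc_lip hCne' hCcl' hCcv' y' y
    have hyy : ‖y' - y‖ < (K + Rx) * δ + δ := by
      have hsplit : y' - y = (Rfun K x' - Rx) • (u' : Euc d) + Rx • ((u' : Euc d) - (u : Euc d)) := by
        rw [hy, hy']
        rw [sub_smul, smul_sub]
        abel
      have hR' : |Rfun K x' - Rx| ≤ K * ‖x' - x‖ := by
        rw [hRxdef, Rfun, Rfun]
        have h1 : K * (1 + ‖x'‖) + 2 - (K * (1 + ‖x‖) + 2) = K * (‖x'‖ - ‖x‖) := by ring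
        rw [h1, abs_mul, abs_of_pos hK]
        exact mul_le_mul_of_nonneg_left (abs_norm_sub_norm_le x' x) hK.le
      have hn1 : ‖(Rfun K x' - Rx) • (u' : Euc d)‖ ≤ K * ‖x' - x‖ := by
        rw [norm_smul, Real.norm_eq_abs]
        calc |Rfun K x' - Rx| * ‖(u' : Euc d)‖ ≤ |Rfun K x' - Rx| * 1 :=
              mul_le_mul_of_nonneg_left hunorm' (abs_nonneg _)
          _ = |Rfun K x' - Rx| := mul_one _
          _ ≤ K * ‖x' - x‖ := hR'
      have hn2 : ‖Rx • ((u' : Euc d) - (u : Euc d))‖ < Rx * δ := by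
        rw [norm_smul, Real.norm_eq_abs, abs_of_pos hRx0]
        exact mul_lt_mul_of_pos_left hdu hRx0
      have htri := norm_add_le ((Rfun K x' - Rx) • (u' : Euc d)) (Rx • ((u' : Euc d) - (u : Euc d)))
      rw [← hsplit] at htri
      have hKd : K * ‖x' - x‖ ≤ K * δ := mul_le_mul_of_nonneg_left hxx'.le hK.le
      nlinarith
    have hfin : (K + Rx) * δ + δ ≤ ε/2 := by
      have h1 : (K + Rx + 1) * δ ≤ (K + Rx + 1) * (ε/(2*(K + Rx + 1))) :=
        mul_le_mul_of_nonneg_left hδε1 (by positivity)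
      have h2 : (K + Rx + 1) * (ε/(2*(K + Rx + 1))) = ε/2 := by field_simp
      nlinarith
    linarith
  -- combine
  have hsplit : dist (param H K l x' s' u') (param H K l x s u) ≤
      ‖pcc (Cset H K l p') y' - pcc (Cset H K l p') y‖ +
      ‖pcc (Cset H K l p') y - pcc (Cset H K l p) y‖ := by
    rw [param, param, dist_eq_norm, ← hRxdef, ← hp, ← hp', ← hy, ← hy']
    exact norm_sub_le_norm_sub_add_norm_sub _ _ _
  have hterm2' : ‖pcc (Cset H K l p') y - pcc (Cset H K l p) y‖ ≤ ε/2 := by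
    rw [norm_sub_rev]; exact hterm2
  calc dist ((fun q : Euc d × S × (Metric.closedBall (0 : Euc d) 1) =>
          param H K l q.1 q.2.1 q.2.2) (x', s', u'))
        ((fun q : Euc d × S × (Metric.closedBall (0 : Euc d) 1) =>
          param H K l q.1 q.2.1 q.2.2) (x, s, u))
      = dist (param H K l x' s' u') (param H K l x s u) := rfl
    _ ≤ _ := hsplit
    _ < ε/2 + ε/2 := by linarith
    _ = ε := by ring

end ParamCont


/-- approximation theorem — a set-valued map satisfying (A1) is the
decreasing intersection of images of continuous single-valued parametrizations. -/
theorem stmt_3 {d : ℕ} {S : Type*} [MetricSpace S] [CompactSpace S]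
    (H : Euc d → S → Set (Euc d))
    (hA1i : ∀ (x : Euc d) (s : S),
      (H x s).Nonempty ∧ IsCompact (H x s) ∧ Convex ℝ (H x s))
    (hA1ii : ∃ K > (0 : ℝ), ∀ (x : Euc d) (s : S), ∀ z ∈ H x s, ‖z‖ ≤ K * (1 + ‖x‖))
    (hA1iii : ∀ (x : Euc d) (s : S) (xn : ℕ → Euc d) (sn : ℕ → S)
      (zn : ℕ → Euc d) (z : Euc d),
      Tendsto xn atTop (𝓝 x) → Tendsto sn atTop (𝓝 s) →
      (∀ n, zn n ∈ H (xn n) (sn n)) → Tendsto zn atTop (𝓝 z) → z ∈ H x s) :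
    ∃ hl : ℕ → Euc d → S → (Metric.closedBall (0 : Euc d) 1) → Euc d,
      (∀ l, Continuous (fun p : Euc d × S × (Metric.closedBall (0 : Euc d) 1) =>
        hl l p.1 p.2.1 p.2.2)) ∧
      (∀ l (x : Euc d) (s : S),
        Convex ℝ (Set.range (hl l x s)) ∧ IsCompact (Set.range (hl l x s))) ∧
      (∀ l (x : Euc d) (s : S),
        H x s ⊆ Set.range (hl (l + 1) x s) ∧
        Set.range (hl (l + 1) x s) ⊆ Set.range (hl l x s)) ∧
      (∀ l, ∃ Kl > (0 : ℝ), ∀ (x : Euc d) (s : S) (u : Metric.closedBall (0 : Euc d) 1),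
        ‖hl l x s u‖ ≤ Kl * (1 + ‖x‖)) ∧
      (∀ (x : Euc d) (s : S), H x s = ⋂ l, Set.range (hl l x s)) := by
  obtain ⟨K, hK, hbd⟩ := hA1ii
  have hne : ∀ x s, (H x s).Nonempty := fun x s => (hA1i x s).1
  have hcl : ∀ x s, IsClosed (H x s) := fun x s => (hA1i x s).2.1.isClosed
  have hcv : ∀ x s, Convex ℝ (H x s) := fun x s => (hA1i x s).2.2
  refine ⟨fun l x s u => param H K l x s u, ?_, ?_, ?_, ?_, ?_⟩
  · intro l; exact param_continuous hne hbd hK l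
  · intro l x s
    rw [param_range hne hbd hK l x s]
    exact ⟨cset_convex l (x, s), cset_compact hne hbd hK l (x, s)⟩
  · intro l x s
    rw [param_range hne hbd hK (l+1) x s, param_range hne hbd hK l x s]
    exact ⟨h_subset_cset hne hbd hK (l+1) (x, s),
      cset_antitone hne hbd hK (Nat.le_succ l) (x, s)⟩
  · intro l
    refine ⟨K + 1, by linarith, ?_⟩
    intro x s u
    have h1 : param H K l x s u ∈ Cset H K l (x, s) := by
      rw [← param_range hne hbd hK l x s]; exact ⟨u, rfl⟩
    have h2 : ‖param H K l x s u‖ ≤ K * (1 + ‖x‖) + 1 :=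
      cset_bounded hne hbd hK l (x, s) h1
    have h3 : (0:ℝ) ≤ ‖x‖ := norm_nonneg x
    nlinarith
  · intro x s
    have h1 : ∀ l, Set.range (param H K l x s) = Cset H K l (x, s) :=
      fun l => param_range hne hbd hK l x s
    have h2 : ⋂ l, Cset H K l (x, s) = H x s :=
      cset_inter hne hbd hK hcl hcv hA1iii (x, s)
    calc H x s = ⋂ l, Cset H K l (x, s) := h2.symm
      _ = ⋂ l, Set.range (param H K l x s) := (Set.iInter_congr h1).symm
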